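/- The functions A(t) = A₀(3(A₀/(B₀C₀))t+1)^{-1/3}, B(t) = B₀(3(A₀/(B₀C₀))t+1)^{1/3}, C(t) = C₀(3(A₀/(B₀C₀))t+1)^{1/3} solve the ODE system dA/dt = -A²/(BC), dB/dt = A/C, dC/dt = A/B with initial values A₀, B₀, C₀ > 0, for all t ≥ 0. -/

import Mathlib

/-- The explicit functions `A(t) = A₀(3kt+1)^{-1/3}`, `B(t) = B₀(3kt+1)^{1/3}`,
`C(t) = C₀(3kt+1)^{1/3}` with `k = A₀/(B₀C₀)` solve the Nil Ricci flow ODE system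
`A' = -A²/(BC)`, `B' = A/C`, `C' = A/B` with initial values `A₀, B₀, C₀ > 0`, for all
`t ≥ 0`. -/
theorem nil_ricci_flow_solution (A₀ B₀ C₀ : ℝ) (hA : 0 < A₀) (hB : 0 < B₀) (hC : 0 < C₀) :
    let k := A₀ / (B₀ * C₀)
    let A : ℝ → ℝ := fun t => A₀ * (3 * k * t + 1) ^ (-(1 / 3) : ℝ)
    let B : ℝ → ℝ := fun t => B₀ * (3 * k * t + 1) ^ ((1 / 3) : ℝ)
    let C : ℝ → ℝ := fun t => C₀ * (3 * k * t + 1) ^ ((1 / 3) : ℝ)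
    A 0 = A₀ ∧ B 0 = B₀ ∧ C 0 = C₀ ∧
    ∀ t : ℝ, 0 ≤ t →
      HasDerivAt A (-(A t) ^ 2 / (B t * C t)) t ∧
      HasDerivAt B (A t / C t) t ∧
      HasDerivAt C (A t / B t) t := by
  intro k A B C
  have hk : 0 < k := div_pos hA (mul_pos hB hC)
  refine ⟨by simp [A], by simp [B], by simp [C], ?_⟩
  intro t ht
  set u : ℝ := 3 * k * t + 1 with hu
  have hu0 : 0 < u := by
    have : 0 ≤ 3 * k * t := by positivity
    simp only [hu]; linarith
  have hune : u ≠ 0 := ne_of_gt hu0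
  have hud : HasDerivAt (fun s : ℝ => 3 * k * s + 1) (3 * k) t := by
    simpa using ((hasDerivAt_id t).const_mul (3 * k)).add_const 1
  have h1 : u ^ ((1:ℝ)/3) * u ^ ((1:ℝ)/3) = u ^ ((2:ℝ)/3) := by
    rw [← Real.rpow_add hu0]; norm_num
  have h2 : u ^ (-(1/3) : ℝ) * u ^ (-(1/3) : ℝ) = u ^ (-(2/3) : ℝ) := by
    rw [← Real.rpow_add hu0]; norm_num
  have h3 : u ^ (-(2/3) : ℝ) / u ^ ((2:ℝ)/3) = u ^ (-(4/3) : ℝ) := by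
    rw [← Real.rpow_sub hu0]; norm_num
  have h3' : u ^ (-(1/3) : ℝ) / u ^ ((1:ℝ)/3) = u ^ (-(2/3) : ℝ) := by
    rw [← Real.rpow_sub hu0]; norm_num
  have hupos : ∀ p : ℝ, 0 < u ^ p := fun p => Real.rpow_pos_of_pos hu0 p
  refine ⟨?_, ?_, ?_⟩
  · have hd : HasDerivAt A (A₀ * (3 * k * (-(1/3) : ℝ) * u ^ ((-(1/3) : ℝ) - 1))) t := by
      exact (hud.rpow_const (Or.inl hune)).const_mul A₀
    convert hd using 1
    have he : ((-(1/3) : ℝ) - 1) = (-(4/3) : ℝ) := by norm_num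
    rw [he]
    show -(A₀ * u ^ (-(1/3) : ℝ)) ^ 2 / (B₀ * u ^ ((1:ℝ)/3) * (C₀ * u ^ ((1:ℝ)/3)))
        = A₀ * (3 * k * (-(1/3)) * u ^ (-(4/3) : ℝ))
    calc -(A₀ * u ^ (-(1/3) : ℝ)) ^ 2 / (B₀ * u ^ ((1:ℝ)/3) * (C₀ * u ^ ((1:ℝ)/3)))
        = -((A₀ * A₀) * (u ^ (-(1/3) : ℝ) * u ^ (-(1/3) : ℝ)))
            / ((B₀ * C₀) * (u ^ ((1:ℝ)/3) * u ^ ((1:ℝ)/3))) := by ring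
      _ = -((A₀ * A₀) * u ^ (-(2/3) : ℝ)) / ((B₀ * C₀) * u ^ ((2:ℝ)/3)) := by rw [h1, h2]
      _ = -(A₀ * A₀ / (B₀ * C₀)) * (u ^ (-(2/3) : ℝ) / u ^ ((2:ℝ)/3)) := by
          field_simp
      _ = -(A₀ * A₀ / (B₀ * C₀)) * u ^ (-(4/3) : ℝ) := by rw [h3]
      _ = A₀ * (3 * k * (-(1/3)) * u ^ (-(4/3) : ℝ)) := by
          simp only [k]; field_simp
  · have hd : HasDerivAt B (B₀ * (3 * k * ((1:ℝ)/3) * u ^ (((1:ℝ)/3) - 1))) t := by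
      exact (hud.rpow_const (Or.inl hune)).const_mul B₀
    convert hd using 1
    have he : (((1:ℝ)/3) - 1) = (-(2/3) : ℝ) := by norm_num
    rw [he]
    show A₀ * u ^ (-(1/3) : ℝ) / (C₀ * u ^ ((1:ℝ)/3))
        = B₀ * (3 * k * (1/3) * u ^ (-(2/3) : ℝ))
    calc A₀ * u ^ (-(1/3) : ℝ) / (C₀ * u ^ ((1:ℝ)/3))
        = (A₀ / C₀) * (u ^ (-(1/3) : ℝ) / u ^ ((1:ℝ)/3)) := by
          field_simp
      _ = (A₀ / C₀) * u ^ (-(2/3) : ℝ) := by rw [h3']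
      _ = B₀ * (3 * k * (1/3) * u ^ (-(2/3) : ℝ)) := by
          simp only [k]; field_simp
  · have hd : HasDerivAt C (C₀ * (3 * k * ((1:ℝ)/3) * u ^ (((1:ℝ)/3) - 1))) t := by
      exact (hud.rpow_const (Or.inl hune)).const_mul C₀
    convert hd using 1
    have he : (((1:ℝ)/3) - 1) = (-(2/3) : ℝ) := by norm_num
    rw [he]
    show A₀ * u ^ (-(1/3) : ℝ) / (B₀ * u ^ ((1:ℝ)/3))
        = C₀ * (3 * k * (1/3) * u ^ (-(2/3) : ℝ))
    calc A₀ * u ^ (-(1/3) : ℝ) / (B₀ * u ^ ((1:ℝ)/3))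
        = (A₀ / B₀) * (u ^ (-(1/3) : ℝ) / u ^ ((1:ℝ)/3)) := by
          field_simp
      _ = (A₀ / B₀) * u ^ (-(2/3) : ℝ) := by rw [h3']
      _ = C₀ * (3 * k * (1/3) * u ^ (-(2/3) : ℝ)) := by
          simp only [k]; field_simp
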